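/- Let Q be symmetric PSD with ker(Q) = span(1), and let α ⊂ [n], |α| ≥ 2, with reduced Laplacian Q_red := Q/α^c. Then the reduced resistance curvature p_red := p[α] − Q[α,α^c] Q[α^c,α^c]^{−1} p[α^c] satisfies 1ᵀ p_red = 1, i.e., the sum of resistance curvatures remains 1 after Kron reduction. -/

import Mathlib

open Matrix Classical

/-- The Moore–Penrose pseudoinverse of a real matrix, defined via its four
characterizing Penrose equations (which have a unique solution). -/
noncomputable def pinv {m k : Type*} [Fintype m] [Fintype k]
    (A : Matrix m k ℝ) : Matrix k m ℝ :=
  if h : ∃ X : Matrix k m ℝ,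
      A * X * A = A ∧ X * A * X = X ∧ (A * X)ᵀ = A * X ∧ (X * A)ᵀ = X * A
  then h.choose else 0

/-- Submatrix of `A` with rows indexed by `α` and columns by `β`. -/
def subm {n : ℕ} (A : Matrix (Fin n) (Fin n) ℝ) (α β : Finset (Fin n)) :
    Matrix {i // i ∈ α} {j // j ∈ β} ℝ :=
  Matrix.of fun i j => A i.1 j.1

theorem reduced_resistance_curvature_sums_to_one
    {n : ℕ} (hn : 2 ≤ n) (Q : Matrix (Fin n) (Fin n) ℝ)
    (hQ : Q.PosSemidef)
    (hker : ∀ v : Fin n → ℝ, Q.mulVec v = 0 ↔ ∃ c : ℝ, v = fun _ => c)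
    (ζ : Fin n → ℝ) (hζ : ζ = fun i => pinv Q i i)
    (p : Fin n → ℝ)
    (hp : p = (1 / 2 : ℝ) • Q.mulVec ζ + (1 / (n : ℝ)) • ((fun _ => 1) : Fin n → ℝ))
    (α : Finset (Fin n)) (hα : 2 ≤ α.card)
    (pred : {i // i ∈ α} → ℝ)
    (hpred : pred = (fun i => p i.1) -
      (subm Q α αᶜ * (subm Q αᶜ αᶜ)⁻¹).mulVec (fun i => p i.1)) :
    ∑ i, pred i = 1 := by
  have hn0 : (n : ℝ) ≠ 0 := Nat.cast_ne_zero.mpr (by omega)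
  have hQ1 : Q.mulVec (fun _ => (1 : ℝ)) = 0 := (hker _).mpr ⟨1, rfl⟩
  have hsymm : ∀ i j, Q i j = Q j i := fun i j => by
    simpa using congrFun (congrFun hQ.1 j) i
  have hcolsum : ∀ j, ∑ i, Q i j = 0 := by
    intro j
    have h1 : ∑ i, Q j i = 0 := by
      simpa [Matrix.mulVec, dotProduct] using congrFun hQ1 j
    rw [Finset.sum_congr rfl (fun i _ => hsymm i j)]
    exact h1
  -- sum of p is 1
  have hsump : ∑ i, p i = 1 := by
    have h1 : ∑ i, (Q.mulVec ζ) i = 0 := by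
      simp only [Matrix.mulVec, dotProduct]
      rw [Finset.sum_comm]
      simp only [← Finset.sum_mul, hcolsum]
      simp
    subst hp
    simp [Finset.sum_add_distrib, ← Finset.sum_mul, Finset.mul_sum, h1, hn0,
      mul_comm]
  set S := subm Q αᶜ αᶜ with hS
  set B := subm Q α αᶜ with hB
  have hαne : α.Nonempty := Finset.card_pos.mp (by omega)
  have hSpd : S.PosDef := by
    rw [Matrix.posDef_iff_dotProduct_mulVec]
    constructor
    · ext i j
      simpa [hS, subm] using hsymm j.1 i.1
    · intro x hx
      rw [star_trivial]
      set xhat : Fin n → ℝ := fun i => if h : i ∈ αᶜ then x ⟨i, h⟩ else 0 with hxhat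
      have hx0 : ∀ i : Fin n, i ∉ αᶜ → xhat i = 0 := fun i hi => by
        rw [hxhat]; exact dif_neg hi
      have hquad : xhat ⬝ᵥ Q.mulVec xhat = x ⬝ᵥ S.mulVec x := by
        simp only [dotProduct, Matrix.mulVec]
        rw [← Finset.sum_subset (Finset.subset_univ αᶜ)
          (fun i _ hi => by rw [hx0 i hi, zero_mul])]
        rw [← Finset.sum_coe_sort αᶜ]
        refine Finset.sum_congr rfl fun i _ => ?_
        have hxi : xhat i.1 = x i := by rw [hxhat]; exact dif_pos i.2
        rw [hxi]
        congr 1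
        rw [← Finset.sum_subset (Finset.subset_univ αᶜ)
          (fun j _ hj => by rw [hx0 j hj, mul_zero])]
        rw [← Finset.sum_coe_sort αᶜ]
        refine Finset.sum_congr rfl fun j _ => ?_
        have hxj : xhat j.1 = x j := by rw [hxhat]; exact dif_pos j.2
        rw [hxj]
        rfl
      have hnn : 0 ≤ x ⬝ᵥ S.mulVec x := by
        rw [← hquad]
        simpa using hQ.dotProduct_mulVec_nonneg xhat
      rcases lt_or_eq_of_le hnn with h | h
      · exact h
      · exfalso
        have hz : Q.mulVec xhat = 0 := by
          refine (hQ.dotProduct_mulVec_zero_iff xhat).mp ?_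
          simpa using hquad.trans h.symm
        obtain ⟨c, hc⟩ := (hker xhat).mp hz
        obtain ⟨i0, hi0⟩ := hαne
        have hc0 : c = 0 := by
          have h1 : xhat i0 = c := by rw [hc]
          rw [← h1, hx0 i0 (by simp [hi0])]
        apply hx
        funext j
        have h2 : xhat j.1 = c := by rw [hc]
        have h3 : xhat j.1 = x j := by rw [hxhat]; exact dif_pos j.2
        rw [Pi.zero_apply, ← h3, h2, hc0]
  have hSunit : IsUnit S.det := isUnit_iff_ne_zero.mpr hSpd.det_pos.ne'
  have hSinv : S * S⁻¹ = 1 := Matrix.mul_nonsing_inv S hSunit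
  have hones : Matrix.vecMul (fun _ => (1 : ℝ)) B = - Matrix.vecMul (fun _ => (1 : ℝ)) S := by
    funext j
    have hsplit : ∑ i ∈ α, Q i j.1 + ∑ i ∈ αᶜ, Q i j.1 = 0 := by
      rw [Finset.sum_add_sum_compl]; exact hcolsum j.1
    have hα' : Matrix.vecMul (fun _ => (1 : ℝ)) B j = ∑ i ∈ α, Q i j.1 := by
      rw [← Finset.sum_coe_sort α (fun i => Q i j.1)]
      simp [Matrix.vecMul, dotProduct, hB, subm]
    have hαc : Matrix.vecMul (fun _ => (1 : ℝ)) S j = ∑ i ∈ αᶜ, Q i j.1 := by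
      rw [← Finset.sum_coe_sort αᶜ (fun i => Q i j.1)]
      simp [Matrix.vecMul, dotProduct, hS, subm]
    rw [Pi.neg_apply, hα', hαc]
    linarith
  have hkey : Matrix.vecMul (fun _ => (1 : ℝ)) (B * S⁻¹) = fun _ => (-1 : ℝ) := by
    rw [← Matrix.vecMul_vecMul, hones, Matrix.neg_vecMul, Matrix.vecMul_vecMul, hSinv]
    funext j
    simp [Matrix.vecMul_one]
  set q : {j // j ∈ αᶜ} → ℝ := fun j => p j.1 with hq
  have hsum2 : ∑ i, ((B * S⁻¹).mulVec q) i = - ∑ j, q j := by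
    simp only [Matrix.mulVec, dotProduct]
    rw [Finset.sum_comm]
    have hc : ∀ j : {j // j ∈ αᶜ}, ∑ i, (B * S⁻¹) i j * q j = - q j := by
      intro j
      rw [← Finset.sum_mul]
      have h4 : ∑ i, (B * S⁻¹) i j = -1 := by
        have := congrFun hkey j
        simpa [Matrix.vecMul, dotProduct] using this
      rw [h4]; ring
    rw [Finset.sum_congr rfl (fun j _ => hc j)]
    simp
  rw [hpred]
  simp only [Pi.sub_apply, Finset.sum_sub_distrib]
  rw [hsum2]
  have hfin : ∑ i : {i // i ∈ α}, p i.1 + ∑ j : {j // j ∈ αᶜ}, p j.1 = 1 := by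
    rw [Finset.sum_coe_sort α (fun i => p i), Finset.sum_coe_sort αᶜ (fun i => p i),
      Finset.sum_add_sum_compl]
    exact hsump
  simp only [hq]
  linarith
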